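/- arXiv:1310.2282 — 5 statements merged into one kernel-verified Lean document; each statement's English description precedes it below -/
import Mathlib

section
/- Let u : ℤ × ℤ → ℝ satisfy u(i+1,j+1)·u(i,j) = (u(i+1,j) - 1)·(u(i,j+1) - 1) for all i,j, and assume u(i,j) ≠ 0 and u(i+1,j) ≠ 1 for all i,j. Then the function J(i,j) = (u(i,j+2)/(u(i,j+1) - 1) + 1)·((u(i,j) - 1)/u(i,j+1) + 1) satisfies J(i+1,j) = J(i,j) for all i,j, provided additionally u(i,j+1) ≠ 0 and u(i,j+1) ≠ 1 for all i,j. -/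
theorem stmt_1 (u : ℤ × ℤ → ℝ)
    (heq : ∀ i j : ℤ, u (i+1, j+1) * u (i, j) = (u (i+1, j) - 1) * (u (i, j+1) - 1))
    (h0 : ∀ i j : ℤ, u (i, j) ≠ 0)
    (h1 : ∀ i j : ℤ, u (i+1, j) ≠ 1)
    (h2 : ∀ i j : ℤ, u (i, j+1) ≠ 0)
    (h3 : ∀ i j : ℤ, u (i, j+1) ≠ 1) :
    ∀ i j : ℤ,
      (fun i j => (u (i, j+2) / (u (i, j+1) - 1) + 1) * ((u (i, j) - 1) / u (i, j+1) + 1))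
        (i+1) j =
      (fun i j => (u (i, j+2) / (u (i, j+1) - 1) + 1) * ((u (i, j) - 1) / u (i, j+1) + 1))
        i j := by
  intro i j
  simp only
  have e1 := heq i j
  have e2 := heq i (j+1)
  have hj : (j:ℤ)+1+1 = j+2 := by ring
  rw [hj] at e2
  have hb : u (i, j+1) ≠ 0 := h2 i j
  have hb1 : u (i, j+1) - 1 ≠ 0 := sub_ne_zero.mpr (h3 i j)
  have hB : u (i+1, j+1) ≠ 0 := h2 (i+1) j
  have hB1 : u (i+1, j+1) - 1 ≠ 0 := sub_ne_zero.mpr (h3 (i+1) j)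
  have k1 : u (i+1, j+2) / (u (i+1, j+1) - 1) = (u (i, j+2) - 1) / u (i, j+1) := by
    rw [div_eq_div_iff hB1 hb]; linarith [e2]
  have k2 : (u (i+1, j) - 1) / u (i+1, j+1) = u (i, j) / (u (i, j+1) - 1) := by
    rw [div_eq_div_iff hB hb1]; linarith [e1]
  rw [k1, k2]
  field_simp
  ring
end

section
/- Let u : ℤ × ℤ → ℝ satisfy u(i+1,j+1)·(u(i,j) + 1) = u(i,j+1)·(u(i+1,j) + 1) for all i,j, with u(i,j+1) ≠ 0 for all i,j. Then φ(i,j) = (u(i,j) + 1)/u(i,j+1) satisfies φ(i+1,j) = φ(i,j) for all i,j; that is, φ is a first-order j-integral of the equation. -/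
theorem stmt_3 (u : ℤ × ℤ → ℝ)
    (heq : ∀ i j : ℤ, u (i+1, j+1) * (u (i, j) + 1) = u (i, j+1) * (u (i+1, j) + 1))
    (h0 : ∀ i j : ℤ, u (i, j+1) ≠ 0) :
    ∀ i j : ℤ,
      (fun i j => (u (i, j) + 1) / u (i, j+1)) (i+1) j =
      (fun i j => (u (i, j) + 1) / u (i, j+1)) i j := by
  intro i j
  simp only
  rw [div_eq_div_iff (h0 (i+1) j) (h0 i j)]
  linarith [heq i j]
end

section
/- Let u : ℤ × ℤ → ℝ satisfy u(i+1,j+1)·(u(i,j) + 1) = u(i,j+1)·(u(i+1,j) + 1) for all i,j, and assume u(i+1,j) ≠ u(i,j) and u(i,j+1) ≠ 0 and u(i,j) + 1 ≠ 0 for all i,j. Then I(i,j) = (u(i+2,j) - u(i+1,j))/(u(i+1,j) - u(i,j)) satisfies I(i,j+1) = I(i,j) for all i,j; that is, I is a second-order i-integral. -/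
theorem stmt_4 (u : ℤ × ℤ → ℝ)
    (heq : ∀ i j : ℤ, u (i+1, j+1) * (u (i, j) + 1) = u (i, j+1) * (u (i+1, j) + 1))
    (h0 : ∀ i j : ℤ, u (i+1, j) ≠ u (i, j))
    (h1 : ∀ i j : ℤ, u (i, j+1) ≠ 0)
    (h2 : ∀ i j : ℤ, u (i, j) + 1 ≠ 0) :
    ∀ i j : ℤ,
      (fun i j => (u (i+2, j) - u (i+1, j)) / (u (i+1, j) - u (i, j))) i (j+1) =
      (fun i j => (u (i+2, j) - u (i+1, j)) / (u (i+1, j) - u (i, j))) i j := by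
  intro i j
  simp only
  have e1 := heq i j
  have e2 := heq (i+1) j
  rw [show i+1+1 = i+2 from by ring] at e2
  have hba : u (i+1, j) - u (i, j) ≠ 0 := sub_ne_zero.mpr (h0 i j)
  have hdc : u (i+1, j+1) - u (i, j+1) ≠ 0 := sub_ne_zero.mpr (h0 i (j+1))
  rw [div_eq_div_iff hdc hba]
  have key : ((u (i+2, j+1) - u (i+1, j+1)) * (u (i+1, j) - u (i, j)) -
      (u (i+2, j) - u (i+1, j)) * (u (i+1, j+1) - u (i, j+1))) *
      ((u (i, j) + 1) * (u (i+1, j) + 1)) = 0 := by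
    linear_combination (-(u (i, j) + 1) * (u (i+2, j) - u (i+1, j))) * e1 +
      ((u (i+1, j) - u (i, j)) * (u (i, j) + 1)) * e2
  rcases mul_eq_zero.mp key with h | h
  · linarith [sub_eq_zero.mp h]
  · rcases mul_eq_zero.mp h with h' | h'
    · exact absurd h' (h2 i j)
    · exact absurd h' (h2 (i+1) j)
end

section
/- Let u : ℤ × ℤ → ℝ, let ζ : ℝ → ℝ, and let φ : ℤ × ℤ → ℝ, α, β, γ : ℝ → ℝ be such that: (a) φ(i+1,j) = φ(i,j) for all i,j (φ is a j-integral); (b) ζ(u(i,j+1)) = α(φ(i,j)) + β(φ(i,j))/(γ(φ(i,j)) - ζ(u(i,j))) for all i,j, with γ(φ(i,j)) - ζ(u(i,j)) ≠ 0. Assume also that ζ(u(i+3,j)) ≠ ζ(u(i+2,j)), ζ(u(i+1,j)) ≠ ζ(u(i,j)), ζ(u(i+3,j+1)) ≠ ζ(u(i+2,j+1)), and ζ(u(i+1,j+1)) ≠ ζ(u(i,j+1)) for all i,j, and β(φ(i,j)) ≠ 0. Then I(i,j) = ((ζ(u(i+3,j)) - ζ(u(i+1,j)))·(ζ(u(i+2,j))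 - ζ(u(i,j))))/((ζ(u(i+3,j)) - ζ(u(i+2,j)))·(ζ(u(i+1,j)) - ζ(u(i,j)))) satisfies I(i,j+1) = I(i,j) for all i,j. -/
theorem stmt_7 (u : ℤ × ℤ → ℝ) (ζ : ℝ → ℝ) (φ : ℤ × ℤ → ℝ) (α β γ : ℝ → ℝ)
    (hφ : ∀ i j : ℤ, φ (i+1, j) = φ (i, j))
    (hmob : ∀ i j : ℤ,
      ζ (u (i, j+1)) = α (φ (i, j)) + β (φ (i, j)) / (γ (φ (i, j)) - ζ (u (i, j))))
    (hden : ∀ i j : ℤ, γ (φ (i, j)) - ζ (u (i, j)) ≠ 0)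
    (h32 : ∀ i j : ℤ, ζ (u (i+3, j)) ≠ ζ (u (i+2, j)))
    (h10 : ∀ i j : ℤ, ζ (u (i+1, j)) ≠ ζ (u (i, j)))
    (h32' : ∀ i j : ℤ, ζ (u (i+3, j+1)) ≠ ζ (u (i+2, j+1)))
    (h10' : ∀ i j : ℤ, ζ (u (i+1, j+1)) ≠ ζ (u (i, j+1)))
    (hβ : ∀ i j : ℤ, β (φ (i, j)) ≠ 0) :
    ∀ i j : ℤ,
      (fun i j => ((ζ (u (i+3, j)) - ζ (u (i+1, j))) * (ζ (u (i+2, j)) - ζ (u (i, j)))) /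
        ((ζ (u (i+3, j)) - ζ (u (i+2, j))) * (ζ (u (i+1, j)) - ζ (u (i, j))))) i (j+1) =
      (fun i j => ((ζ (u (i+3, j)) - ζ (u (i+1, j))) * (ζ (u (i+2, j)) - ζ (u (i, j)))) /
        ((ζ (u (i+3, j)) - ζ (u (i+2, j))) * (ζ (u (i+1, j)) - ζ (u (i, j))))) i j := by
  intro i j
  simp only []
  -- φ is constant along the row
  have hc1 : φ (i+1, j) = φ (i, j) := hφ i j
  have hc2 : φ (i+2, j) = φ (i, j) := by
    have := hφ (i+1) j
    rw [show i+1+1 = i+2 by ring] at this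
    rw [this, hc1]
  have hc3 : φ (i+3, j) = φ (i, j) := by
    have := hφ (i+2) j
    rw [show i+2+1 = i+3 by ring] at this
    rw [this, hc2]
  set c := φ (i, j) with hcdef
  set a0 := ζ (u (i, j))
  set a1 := ζ (u (i+1, j))
  set a2 := ζ (u (i+2, j))
  set a3 := ζ (u (i+3, j))
  have g0 : γ c - a0 ≠ 0 := hden i j
  have g1 : γ c - a1 ≠ 0 := by have := hden (i+1) j; rwa [hc1] at this
  have g2 : γ c - a2 ≠ 0 := by have := hden (i+2) j; rwa [hc2] at this
  have g3 : γ c - a3 ≠ 0 := by have := hden (i+3) j; rwa [hc3] at this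
  have hb : β c ≠ 0 := hβ i j
  have e0 : ζ (u (i, j+1)) = α c + β c / (γ c - a0) := hmob i j
  have e1 : ζ (u (i+1, j+1)) = α c + β c / (γ c - a1) := by
    have := hmob (i+1) j; rwa [hc1] at this
  have e2 : ζ (u (i+2, j+1)) = α c + β c / (γ c - a2) := by
    have := hmob (i+2) j; rwa [hc2] at this
  have e3 : ζ (u (i+3, j+1)) = α c + β c / (γ c - a3) := by
    have := hmob (i+3) j; rwa [hc3] at this
  have d32 : a3 - a2 ≠ 0 := sub_ne_zero.mpr (h32 i j)
  have d10 : a1 - a0 ≠ 0 := sub_ne_zero.mpr (h10 i j)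
  rw [e0, e1, e2, e3]
  have k31 : (α c + β c / (γ c - a3)) - (α c + β c / (γ c - a1))
      = β c * (a3 - a1) / ((γ c - a3) * (γ c - a1)) := by
    field_simp; ring
  have k20 : (α c + β c / (γ c - a2)) - (α c + β c / (γ c - a0))
      = β c * (a2 - a0) / ((γ c - a2) * (γ c - a0)) := by
    field_simp; ring
  have k32 : (α c + β c / (γ c - a3)) - (α c + β c / (γ c - a2))
      = β c * (a3 - a2) / ((γ c - a3) * (γ c - a2)) := by
    field_simp; ring
  have k10 : (α c + β c / (γ c - a1)) - (α c + β c / (γ c - a0))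
      = β c * (a1 - a0) / ((γ c - a1) * (γ c - a0)) := by
    field_simp; ring
  rw [k31, k20, k32, k10]
  rw [div_mul_div_comm, div_mul_div_comm, div_div_div_eq]
  field_simp
end

section
/- Let A, B, C, D, δ ∈ ℝ, and let u, v, w ∈ ℝ with v + Au + C - δB ≠ 0. Define u₁ = (u·v + δD)/(v + Au + C - δB) and suppose u₁ ≠ u and w = ((u + B)(δu₁ + C) - AD)/(u₁ - u). Then P₂u² + P₁u + P₀ = 0, where P₂ = δv + Aw + AC, P₁ = (C + δB)v + (C - δB)w + (BC - AD - δD)(A - δ) + C², and P₀ = (BC - AD)v - δD·w + BC(C - δB) + D(δAB - AC + δ²B). -/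
theorem stmt_11 (A B C D δ u v w : ℝ)
    (hden : v + A * u + C - δ * B ≠ 0)
    (u₁ : ℝ) (hu₁ : u₁ = (u * v + δ * D) / (v + A * u + C - δ * B))
    (hne : u₁ ≠ u)
    (hw : w = ((u + B) * (δ * u₁ + C) - A * D) / (u₁ - u)) :
    (δ * v + A * w + A * C) * u ^ 2 +
      ((C + δ * B) * v + (C - δ * B) * w + (B * C - A * D - δ * D) * (A - δ) + C ^ 2) * u +
      ((B * C - A * D) * v - δ * D * w + B * C * (C - δ * B) +
        D * (δ * A * B - A * C + δ ^ 2 * B)) = 0 := by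
  have hsub : u₁ - u ≠ 0 := sub_ne_zero.mpr hne
  subst hw
  have h1 : u₁ * (v + A * u + C - δ * B) = u * v + δ * D := by
    rw [hu₁, div_mul_cancel₀]; exact hden
  field_simp
  linear_combination (δ * u ^ 2 + C * u + B * δ * u + B * C - A * D) * h1
end
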